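/- A nonempty closed subset V of ℝ^k that is bounded above in the componentwise order admits a maximal element with respect to that order. -/
import Mathlib


/-- a nonempty closed subset of `ℝ^k` that is bounded above in the
componentwise order admits a maximal element with respect to that order. -/
theorem closed_bddAbove_has_maximal (kk : ℕ) (V : Set (Fin kk → ℝ))
    (hne : V.Nonempty) (hcl : IsClosed V) (hbdd : ∃ u : Fin kk → ℝ, ∀ v ∈ V, v ≤ u) :
    ∃ v ∈ V, ¬ ∃ v' ∈ V, v' ≠ v ∧ v ≤ v' := by
  obtain ⟨v₀, hv₀⟩ := hne
  obtain ⟨u, hu⟩ := hbdd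
  set S : Set (Fin kk → ℝ) := V ∩ Set.Ici v₀ with hS
  have hScl : IsClosed S := hcl.inter isClosed_Ici
  have hSsub : S ⊆ Set.Icc v₀ u := fun w hw => ⟨hw.2, hu w hw.1⟩
  have hSbdd : Bornology.IsBounded S :=
    (Metric.isBounded_Icc v₀ u).subset hSsub
  have hScpt : IsCompact S := Metric.isCompact_of_isClosed_isBounded hScl hSbdd
  have hv₀S : v₀ ∈ S := ⟨hv₀, le_refl v₀⟩
  have hcont : ContinuousOn (fun w : Fin kk → ℝ => ∑ i, w i) S :=
    (continuous_finset_sum Finset.univ fun i _ => continuous_apply i).continuousOn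
  obtain ⟨v, hvS, hmax⟩ := hScpt.exists_isMaxOn ⟨v₀, hv₀S⟩ hcont
  refine ⟨v, hvS.1, ?_⟩
  rintro ⟨v', hv'V, hne', hle⟩
  have hv'S : v' ∈ S := ⟨hv'V, le_trans hvS.2 hle⟩
  have hsum : ∑ i, v' i ≤ ∑ i, v i := hmax hv'S
  have : ∃ i, v i < v' i := by
    by_contra h
    push_neg at h
    exact hne' (le_antisymm (fun i => h i) hle)
  obtain ⟨i, hi⟩ := this
  have hlt : ∑ j, v j < ∑ j, v' j :=
    Finset.sum_lt_sum (fun j _ => hle j) ⟨i, Finset.mem_univ i, hi⟩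
  linarith
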